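/- arXiv:1803.11108 — 3 statements merged into one kernel-verified Lean document; each statement's English description precedes it below -/
import Mathlib

section
/- For all real parameters α, β, γ, δ, the Jacobian determinant σ of the bilinear map θ satisfies σ(x,y) > 0 for every (x,y) in the closed unit square [0,1]² if and only if the four numbers β, δ, βγ − αδ and δ + βγ − β − αδ are all positive. -/
lemma interp_pos {a b t : ℝ} (ha : 0 < a) (hb : 0 < b) (ht0 : 0 ≤ t) (ht1 : t ≤ 1) :
    0 < (1 - t) * a + t * b := by
  rcases eq_or_lt_of_le ht0 with h | h
  · simp [← h, ha]
  · have := mul_pos h hb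
    have : 0 ≤ (1 - t) * a := mul_nonneg (by linarith) ha.le
    nlinarith

/-- The Jacobian determinant of the bilinear map θ, in its explicit affine form
σ(x,y) = β + (δ−β)x + (βγ − β − αδ)y. -/
noncomputable def sigma (α β γ δ : ℝ) (x y : ℝ) : ℝ :=
  β + (δ - β) * x + (β * γ - β - α * δ) * y

theorem stmt_1 (α β γ δ : ℝ) :
    (∀ x ∈ Set.Icc (0 : ℝ) 1, ∀ y ∈ Set.Icc (0 : ℝ) 1, 0 < sigma α β γ δ x y) ↔
      (0 < β ∧ 0 < δ ∧ 0 < β * γ - α * δ ∧ 0 < δ + β * γ - β - α * δ) := by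
  constructor
  · intro h
    have h00 := h 0 ⟨le_refl 0, zero_le_one⟩ 0 ⟨le_refl 0, zero_le_one⟩
    have h10 := h 1 ⟨zero_le_one, le_refl 1⟩ 0 ⟨le_refl 0, zero_le_one⟩
    have h01 := h 0 ⟨le_refl 0, zero_le_one⟩ 1 ⟨zero_le_one, le_refl 1⟩
    have h11 := h 1 ⟨zero_le_one, le_refl 1⟩ 1 ⟨zero_le_one, le_refl 1⟩
    simp only [sigma] at h00 h10 h01 h11
    refine ⟨by linarith, by linarith, by linarith, by linarith⟩
  · rintro ⟨h1, h2, h3, h4⟩ x ⟨hx0, hx1⟩ y ⟨hy0, hy1⟩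
    have hA : 0 < (1 - x) * β + x * δ := interp_pos h1 h2 hx0 hx1
    have hB : 0 < (1 - x) * (β * γ - α * δ) + x * (δ + β * γ - β - α * δ) :=
      interp_pos h3 h4 hx0 hx1
    have := interp_pos hA hB hy0 hy1
    unfold sigma
    nlinarith [this]
end

section
/- Suppose the real parameters α, β, γ, δ satisfy β > 0, δ > 0, βγ − αδ > 0 and δ + βγ − β − αδ > 0 (i.e., the Jacobian determinant of θ is positive at the four vertices of the unit square, so that the quadrilateral with vertices (0,0),(1,0),(γ,δ),(α,β) is convex and positively oriented). Then the bilinear map θ is injective on the closed unit square [0,1]². -/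
/-- The bilinear map θ sending the unit square to the quadrilateral with vertices
(0,0), (1,0), (α,β), (γ,δ). -/
noncomputable def theta (α β γ δ : ℝ) (p : ℝ × ℝ) : ℝ × ℝ :=
  (p.1 + α * p.2 + (γ - 1 - α) * p.1 * p.2, β * p.2 + (δ - β) * p.1 * p.2)

lemma convpos (a b t : ℝ) (ht0 : 0 ≤ t) (ht1 : t ≤ 1) (ha : 0 < a) (hb : 0 < b) :
    0 < a + (b - a) * t := by
  rcases le_or_gt t (1/2) with h | h
  · nlinarith [mul_nonneg ht0 hb.le]
  · nlinarith [mul_nonneg (sub_nonneg.2 ht1) ha.le]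

theorem stmt_2 (α β γ δ : ℝ)
    (hβ : 0 < β) (hδ : 0 < δ) (h3 : 0 < β * γ - α * δ)
    (h4 : 0 < δ + β * γ - β - α * δ) :
    Set.InjOn (theta α β γ δ) (Set.Icc (0 : ℝ) 1 ×ˢ Set.Icc (0 : ℝ) 1) := by
  rintro ⟨x, y⟩ ⟨⟨hx0, hx1⟩, ⟨hy0, hy1⟩⟩ ⟨x', y'⟩ ⟨⟨hx0', hx1'⟩, ⟨hy0', hy1'⟩⟩ heq
  simp only [theta, Prod.mk.injEq] at heq ⊢
  obtain ⟨e1, e2⟩ := heq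
  have hE : 0 < β + (δ - β) * x' := convpos β δ x' hx0' hx1' hβ hδ
  have hF : 0 < (β * γ - α * δ) + (δ - β) * x' := by
    nlinarith [convpos (β * γ - α * δ) (δ + β * γ - β - α * δ) x' hx0' hx1' h3 h4]
  have hD : 0 < β + (δ - β) * x' + (β * γ - β - α * δ) * y := by
    nlinarith [convpos (β + (δ - β) * x') ((β * γ - α * δ) + (δ - β) * x') y hy0 hy1 hE hF]
  have h5 : (β + (δ - β) * x' + (β * γ - β - α * δ) * y) * (x - x') = 0 := by
    linear_combination (β + (δ - β) * x') * e1 - (α + (γ - 1 - α) * x') * e2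
  have h6 : (β + (δ - β) * x' + (β * γ - β - α * δ) * y) * (y - y') = 0 := by
    linear_combination (-((δ - β) * y)) * e1 + (1 + (γ - 1 - α) * y) * e2
  have hx : x = x' := by
    have := mul_eq_zero.1 h5
    rcases this with h | h
    · linarith
    · linarith
  have hy : y = y' := by
    rcases mul_eq_zero.1 h6 with h | h
    · linarith
    · linarith
  exact ⟨hx, hy⟩
end

section
/- Suppose the real parameters α, β, γ, δ satisfy β > 0, δ > 0, βγ − αδ > 0 and δ + βγ − β − αδ > 0. Then the image of the closed unit square [0,1]² under the bilinear map θ equals the convex hull in ℝ² of the four points (0,0), (1,0), (α,β), (γ,δ); thus θ maps the unit square onto the quadrilateral with these vertices. -/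
theorem stmt_3 (α β γ δ : ℝ)
    (hβ : 0 < β) (hδ : 0 < δ) (h3 : 0 < β * γ - α * δ)
    (h4 : 0 < δ + β * γ - β - α * δ) :
    theta α β γ δ '' (Set.Icc (0 : ℝ) 1 ×ˢ Set.Icc (0 : ℝ) 1) =
      convexHull ℝ ({((0 : ℝ), (0 : ℝ)), (1, 0), (α, β), (γ, δ)} : Set (ℝ × ℝ)) := by
  set S : Set (ℝ × ℝ) := {((0 : ℝ), (0 : ℝ)), (1, 0), (α, β), (γ, δ)} with hS
  have m0 : ((0 : ℝ), (0 : ℝ)) ∈ S := Set.mem_insert _ _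
  have m1 : ((1 : ℝ), (0 : ℝ)) ∈ S := Set.mem_insert_of_mem _ (Set.mem_insert _ _)
  have m2 : ((α : ℝ), β) ∈ S :=
    Set.mem_insert_of_mem _ (Set.mem_insert_of_mem _ (Set.mem_insert _ _))
  have m3 : ((γ : ℝ), δ) ∈ S :=
    Set.mem_insert_of_mem _ (Set.mem_insert_of_mem _ (Set.mem_insert_of_mem _ rfl))
  have hC : Convex ℝ (convexHull ℝ S) := convex_convexHull ℝ S
  have hsub := subset_convexHull ℝ S
  apply Set.Subset.antisymm
  · -- image ⊆ hull
    rintro _ ⟨⟨x, y⟩, ⟨hx, hy⟩, rfl⟩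
    simp only [Set.mem_Icc] at hx hy
    have P1 : (1 - x) • ((0 : ℝ), (0 : ℝ)) + x • ((1 : ℝ), (0 : ℝ)) ∈ convexHull ℝ S :=
      hC (hsub m0) (hsub m1) (by linarith [hx.2]) hx.1 (by ring)
    have P2 : (1 - x) • ((α : ℝ), β) + x • ((γ : ℝ), δ) ∈ convexHull ℝ S :=
      hC (hsub m2) (hsub m3) (by linarith [hx.2]) hx.1 (by ring)
    have P3 : (1 - y) • ((1 - x) • ((0 : ℝ), (0 : ℝ)) + x • ((1 : ℝ), (0 : ℝ))) +
        y • ((1 - x) • ((α : ℝ), β) + x • ((γ : ℝ), δ)) ∈ convexHull ℝ S :=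
      hC P1 P2 (by linarith [hy.2]) hy.1 (by ring)
    have heq : theta α β γ δ (x, y) =
        (1 - y) • ((1 - x) • ((0 : ℝ), (0 : ℝ)) + x • ((1 : ℝ), (0 : ℝ))) +
        y • ((1 - x) • ((α : ℝ), β) + x • ((γ : ℝ), δ)) := by
      simp only [theta, Prod.smul_mk, smul_eq_mul, Prod.mk_add_mk]
      exact Prod.ext (by ring) (by ring)
    rw [heq]; exact P3
  · -- hull ⊆ image
    intro p hp
    obtain ⟨u, v⟩ := p
    -- halfplane inequalities
    have key : ∀ a b c : ℝ, a * 0 + b * 0 ≤ c → a * 1 + b * 0 ≤ c → a * α + b * β ≤ c →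
        a * γ + b * δ ≤ c → a * u + b * v ≤ c := by
      intro a b c k0 k1 k2 k3
      have hlin : IsLinearMap ℝ (fun q : ℝ × ℝ => a * q.1 + b * q.2) := by
        constructor
        · intro q r; simp only [Prod.fst_add, Prod.snd_add]; ring
        · intro r q; simp only [Prod.smul_fst, Prod.smul_snd, smul_eq_mul]; ring
      have hhalf : Convex ℝ {q : ℝ × ℝ | a * q.1 + b * q.2 ≤ c} :=
        convex_halfSpace_le hlin c
      have hsub2 : convexHull ℝ S ⊆ {q : ℝ × ℝ | a * q.1 + b * q.2 ≤ c} := by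
        apply convexHull_min _ hhalf
        intro q hq
        simp only [hS, Set.mem_insert_iff, Set.mem_singleton_iff] at hq
        rcases hq with rfl | rfl | rfl | rfl <;> simp only [Set.mem_setOf_eq] <;> linarith
      exact hsub2 hp
    have iv : 0 ≤ v := by
      have := key 0 (-1) 0 (by norm_num) (by norm_num) (by nlinarith) (by nlinarith)
      nlinarith
    have ih : α * v - β * u ≤ 0 := by
      have := key (-β) α 0 (by norm_num) (by nlinarith) (by nlinarith) (by nlinarith)
      nlinarith
    have ig : 0 ≤ (γ - 1) * v - δ * u + δ := by
      have := key δ (-(γ - 1)) δ (by nlinarith) (by nlinarith) (by nlinarith) (by nlinarith)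
      nlinarith
    have ie : (γ - α) * v - (δ - β) * u - (β * γ - α * δ) ≤ 0 := by
      have := key (-(δ - β)) (γ - α) (β * γ - α * δ)
        (by nlinarith) (by nlinarith) (by nlinarith) (by nlinarith)
      nlinarith
    -- quadratic for y, solved by IVT
    set f : ℝ → ℝ := fun y =>
      (β - (β * γ - α * δ)) * y ^ 2 + ((γ - 1 - α) * v - β - (δ - β) * u) * y + v with hf
    have hcont : ContinuousOn f (Set.Icc (0 : ℝ) 1) := by fun_prop
    have hf0 : f 0 = v := by simp [hf]
    have hf1 : f 1 = (γ - α) * v - (δ - β) * u - (β * γ - α * δ) := by simp [hf]; ring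
    have hy0 : (0 : ℝ) ∈ Set.Icc (f 1) (f 0) := by
      rw [Set.mem_Icc, hf0, hf1]; exact ⟨ie, iv⟩
    obtain ⟨y, hy, fy0⟩ := intermediate_value_Icc' (by norm_num : (0:ℝ) ≤ 1) hcont hy0
    simp only [Set.mem_Icc] at hy
    have hQ : (β - (β * γ - α * δ)) * y ^ 2 + ((γ - 1 - α) * v - β - (δ - β) * u) * y + v
        = 0 := fy0
    clear hf fy0 hy0 hf0 hf1 hcont
    -- the segment at height y: from A = (αy, βy) to B = (1+(γ-1)y, δy)
    have hcross : (1 + (γ - 1 - α) * y) * (v - β * y) - ((δ - β) * y) * (u - α * y) = 0 := by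
      linear_combination hQ
    have hKneg : α * (δ * y) - β * (1 + (γ - 1) * y) < 0 := by
      rcases hy.1.eq_or_lt with h | h
      · nlinarith [hβ]
      · nlinarith [mul_pos h3 h, mul_nonneg (by linarith [hy.2] : (0:ℝ) ≤ 1 - y) hβ.le]
    obtain ⟨s, hsdef⟩ : ∃ s : ℝ,
        s = (α * v - β * u) / (α * (δ * y) - β * (1 + (γ - 1) * y)) := ⟨_, rfl⟩
    have hs0 : 0 ≤ s := hsdef ▸ div_nonneg_of_nonpos ih hKneg.le
    have hq1 : u - α * y = s * (1 + (γ - 1 - α) * y) := by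
      rw [hsdef, div_mul_eq_mul_div, eq_div_iff hKneg.ne]
      linear_combination (-α) * hcross
    have hq2 : v - β * y = s * ((δ - β) * y) := by
      rw [hsdef, div_mul_eq_mul_div, eq_div_iff hKneg.ne]
      linear_combination (-β) * hcross
    have hgA : 0 < δ + y * (β * γ - α * δ - β) := by
      rcases le_or_gt 0 (β * γ - α * δ - β) with h | h
      · nlinarith [mul_nonneg hy.1 h]
      · nlinarith [mul_nonpos_of_nonneg_of_nonpos
          (by linarith [hy.2] : (0:ℝ) ≤ 1 - y) h.le]
    have hs1 : s ≤ 1 := by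
      have hrel : (1 - s) * (δ + y * (β * γ - α * δ - β)) = (γ - 1) * v - δ * u + δ := by
        linear_combination δ * hq1 - (γ - 1) * hq2
      nlinarith [ig, hgA]
    refine ⟨(s, y), ⟨Set.mem_Icc.2 ⟨hs0, hs1⟩, Set.mem_Icc.2 ⟨hy.1, hy.2⟩⟩, ?_⟩
    simp only [theta]
    exact Prod.ext (by linear_combination -hq1) (by linear_combination -hq2)
end
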